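/- For the moment curve Γ(ξ) = (ξ, ξ², ..., ξᵏ) in ℝᵏ and any 0 ≤ l ≤ k, the absolute value of the determinant of the k×k matrix whose first l rows are ∂¹Γ(ξ₁), ..., ∂ˡΓ(ξ₁) and whose remaining k−l rows are ∂¹Γ(ξ₂), ..., ∂^{k−l}Γ(ξ₂) equals c_{k,l} · |ξ₂ − ξ₁|^{l(k−l)}, where c_{k,l} = (k choose l) · (∏_{i=1}^{l} i!) · (∏_{j=1}^{k−l} j!). In particular it is bounded below by a positive constant (depending only on k, l) times |ξ₁ − ξ₂|^{l(k−l)}. -/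

import Mathlib

open Finset Matrix

/-- The `i`-th derivative of the moment curve `Γ(ξ) = (ξ, ξ², …, ξᵏ)` in `ℝᵏ`:
its `j`-th coordinate (1-indexed `j`) is `j(j-1)⋯(j-i+1) ξ^{j-i}` (zero if `i > j`). -/
noncomputable def dGamma (k i : ℕ) (ξ : ℝ) : Fin k → ℝ :=
  fun j => (Nat.descFactorial ((j : ℕ) + 1) i : ℝ) * ξ ^ ((j : ℕ) + 1 - i)

private lemma desc_choose {i m c : ℕ} (him : i ≤ m) (hmc : m ≤ c) :
    c.descFactorial i * (c - i).choose (m - i) = m.descFactorial i * c.choose m := by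
  have hic : i ≤ c := him.trans hmc
  have h1 : 0 < (m - i).factorial * (c - m).factorial := by positivity
  apply Nat.eq_of_mul_eq_mul_right h1
  have e1 : (c - i).choose (m - i) * (m - i).factorial * ((c - i) - (m - i)).factorial
      = (c - i).factorial := Nat.choose_mul_factorial_mul_factorial (Nat.sub_le_sub_right hmc i)
  have e2 : (c - i) - (m - i) = c - m := by omega
  rw [e2] at e1
  have e3 : (c - i).factorial * c.descFactorial i = c.factorial :=
    Nat.factorial_mul_descFactorial hic
  have e4 : (m - i).factorial * m.descFactorial i = m.factorial :=
    Nat.factorial_mul_descFactorial him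
  have e5 : c.choose m * m.factorial * (c - m).factorial = c.factorial :=
    Nat.choose_mul_factorial_mul_factorial hmc
  calc c.descFactorial i * (c - i).choose (m - i) * ((m - i).factorial * (c - m).factorial)
      = ((c - i).choose (m - i) * (m - i).factorial * (c - m).factorial) * c.descFactorial i := by
        ring
    _ = (c - i).factorial * c.descFactorial i := by rw [e1]
    _ = c.factorial := e3
    _ = c.choose m * ((m - i).factorial * m.descFactorial i) * (c - m).factorial := by
        rw [e4]; linarith [e5]
    _ = m.descFactorial i * c.choose m * ((m - i).factorial * (c - m).factorial) := by ring

private lemma dGamma_add (k i : ℕ) (hi : 1 ≤ i) (x a : ℝ) (c : Fin k) :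
    dGamma k i (x + a) c
      = ∑ m : Fin k, dGamma k i x m *
          (((((c : ℕ) + 1).choose ((m : ℕ) + 1) : ℕ) : ℝ) * a ^ ((c : ℕ) - (m : ℕ))) := by
  set C := (c : ℕ) with hC
  have hCk : C < k := c.isLt
  set f : ℕ → ℝ := fun m =>
    ((m + 1).descFactorial i : ℝ) * x ^ (m + 1 - i) *
      (((C + 1).choose (m + 1) : ℝ) * a ^ (C - m)) with hf
  have hsum : (∑ m : Fin k, dGamma k i x m *
        (((((c : ℕ) + 1).choose ((m : ℕ) + 1) : ℕ) : ℝ) * a ^ ((c : ℕ) - (m : ℕ))))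
      = ∑ m ∈ Finset.range k, f m := by
    rw [← Fin.sum_univ_eq_sum_range f k]
    exact Finset.sum_congr rfl (fun m _ => rfl)
  rw [hsum]
  have hstep1 : ∑ m ∈ Finset.range k, f m = ∑ m ∈ Finset.range (C + 1), f m := by
    symm
    apply Finset.sum_subset (Finset.range_subset_range.2 hCk)
    intro m _ hm
    rw [Finset.mem_range] at hm
    have : C + 1 < m + 1 := by omega
    simp [hf, Nat.choose_eq_zero_of_lt this]
  have hstep2 : ∑ m ∈ Finset.range (C + 1), f m = ∑ m ∈ Finset.Ico (i - 1) (C + 1), f m := by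
    symm
    apply Finset.sum_subset
    · intro m hm
      rw [Finset.mem_Ico] at hm
      exact Finset.mem_range.2 (by omega)
    · intro m hm hm'
      rw [Finset.mem_range] at hm
      rw [Finset.mem_Ico] at hm'
      have : m + 1 < i := by omega
      simp [hf, Nat.descFactorial_of_lt this]
  rw [hstep1, hstep2]
  by_cases hic : C + 1 < i
  · have he : Finset.Ico (i - 1) (C + 1) = ∅ := by
      apply Finset.Ico_eq_empty; omega
    rw [he, Finset.sum_empty]
    simp [dGamma, Nat.descFactorial_of_lt hic]
    exact Or.inl hic
  · push_neg at hic
    set N := C + 1 - i with hN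
    have hL : dGamma k i (x + a) c
        = ((C + 1).descFactorial i : ℝ) * ∑ p ∈ Finset.range (N + 1),
            x ^ p * a ^ (N - p) * ((N.choose p : ℕ) : ℝ) := by
      rw [dGamma, ← add_pow]
    rw [hL, Finset.mul_sum, Finset.sum_Ico_eq_sum_range]
    have hNr : C + 1 - (i - 1) = N + 1 := by omega
    rw [hNr]
    apply Finset.sum_congr rfl
    intro p hp
    rw [Finset.mem_range] at hp
    have hpN : p ≤ N := by omega
    have h1 : i - 1 + p + 1 = i + p := by omega
    have h2 : i + p - i = p := by omega
    have h3 : C - (i - 1 + p) = N - p := by omega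
    have hkey : (C + 1).descFactorial i * N.choose p
        = (i + p).descFactorial i * (C + 1).choose (i + p) := by
      have h4 := desc_choose (i := i) (m := i + p) (c := C + 1)
        (Nat.le_add_right i p) (by omega)
      rw [show i + p - i = p by omega, show C + 1 - i = N from rfl] at h4
      exact h4
    simp only [hf, h1, h2, h3]
    have hcast : ((C + 1).descFactorial i : ℝ) * ((N.choose p : ℕ) : ℝ)
        = ((i + p).descFactorial i : ℝ) * (((C + 1).choose (i + p) : ℕ) : ℝ) := by
      exact_mod_cast congrArg (Nat.cast (R := ℝ)) hkey
    linear_combination (x ^ p * a ^ (N - p)) * hcast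

private lemma prod_range_shift_factorial (l : ℕ) : ∀ n : ℕ,
    (∏ m ∈ Finset.range n, (l + m + 1)) * l.factorial = (l + n).factorial
  | 0 => by simp
  | n + 1 => by
    rw [Finset.prod_range_succ, mul_comm (∏ m ∈ Finset.range n, (l + m + 1)) (l + n + 1),
      mul_assoc, prod_range_shift_factorial l n, show l + (n+1) = (l + n) + 1 from rfl,
      Nat.factorial_succ]

private lemma det_A (l n : ℕ) :
    (Matrix.of (fun (j m : Fin n) =>
        ((l + (m : ℕ) + 1).descFactorial ((j : ℕ) + 1) : ℝ))).det
      = (∏ m : Fin n, ((l + (m : ℕ) + 1 : ℕ) : ℝ)) * (Nat.superFactorial (n - 1) : ℝ) := by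
  rcases n with _ | n'
  · simp [Matrix.det_fin_zero]
  rw [← Matrix.det_transpose]
  have h1 : (Matrix.of (fun (j m : Fin (n' + 1)) =>
        ((l + (m : ℕ) + 1).descFactorial ((j : ℕ) + 1) : ℝ)))ᵀ
      = Matrix.of (fun (m j : Fin (n' + 1)) =>
          ((l + (m : ℕ) + 1 : ℕ) : ℝ) *
            (Matrix.of (fun (m j : Fin (n' + 1)) =>
              (((l + (m : ℕ)).descFactorial (j : ℕ) : ℕ) : ℝ)) m j)) := by
    ext m j
    simp only [Matrix.transpose_apply, Matrix.of_apply]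
    rw [show l + (m : ℕ) + 1 = (l + (m : ℕ)) + 1 from rfl, Nat.succ_descFactorial_succ]
    push_cast
    ring
  rw [h1, Matrix.det_mul_column]
  congr 1
  have h2 : (Matrix.of (fun (m j : Fin (n' + 1)) =>
        (((l + (m : ℕ)).descFactorial (j : ℕ) : ℕ) : ℝ)))
      = Matrix.of (fun (m j : Fin (n' + 1)) =>
          (descPochhammer ℝ (j : ℕ)).eval (((l + (m : ℕ) : ℕ)) : ℝ)) := by
    ext m j
    simp only [Matrix.of_apply]
    exact (descPochhammer_eval_eq_descFactorial ℝ (l + (m : ℕ)) (j : ℕ)).symm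
  rw [h2, ← Matrix.det_eval_matrixOfPolynomials_eq_det_vandermonde
      (fun m : Fin (n' + 1) => ((l + (m : ℕ) : ℕ) : ℝ))
      (fun j : Fin (n' + 1) => descPochhammer ℝ (j : ℕ))
      (fun j => descPochhammer_natDegree ℝ (j : ℕ))
      (fun j => monic_descPochhammer ℝ (j : ℕ))]
  have h3 : (fun m : Fin (n' + 1) => ((l + (m : ℕ) : ℕ) : ℝ))
      = fun m : Fin (n' + 1) => ((m : ℕ) : ℝ) + (l : ℝ) := by
    funext m; push_cast; ring
  rw [h3, Matrix.det_vandermonde_add, Matrix.det_vandermonde_id_eq_superFactorial,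
    Nat.add_sub_cancel]

private lemma det_triangular (k : ℕ) (ξ : ℝ) :
    (Matrix.of (fun r c : Fin k => dGamma k ((r : ℕ) + 1) ξ c)).det
      = ∏ i ∈ Finset.Icc 1 k, (i.factorial : ℝ) := by
  have hT : (Matrix.of (fun r c : Fin k => dGamma k ((r : ℕ) + 1) ξ c)).BlockTriangular id := by
    intro i j hij
    have hji : (j : ℕ) + 1 < (i : ℕ) + 1 := by
      have : (j : ℕ) < (i : ℕ) := hij
      omega
    show dGamma k ((i : ℕ) + 1) ξ j = 0
    unfold dGamma
    rw [Nat.descFactorial_of_lt hji, Nat.cast_zero, zero_mul]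
  rw [Matrix.det_of_upperTriangular hT]
  have hdiag : ∀ r : Fin k,
      (Matrix.of (fun r c : Fin k => dGamma k ((r : ℕ) + 1) ξ c)) r r
        = ((((r : ℕ) + 1).factorial : ℕ) : ℝ) := by
    intro r
    show dGamma k ((r : ℕ) + 1) ξ r = _
    unfold dGamma
    rw [Nat.sub_self, pow_zero, mul_one, Nat.descFactorial_self]
  rw [Finset.prod_congr rfl (fun r _ => hdiag r), ← Nat.cast_prod,
    Fin.prod_univ_eq_prod_range (fun i => ((i + 1).factorial)) k,
    Nat.prod_range_factorial_succ, ← Nat.prod_Icc_factorial, Nat.cast_prod]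

private lemma const_nat (k l : ℕ) (hl : l ≤ k) (hlk : l < k) :
    (∏ i ∈ Finset.range l, (i + 1).factorial) * (∏ m ∈ Finset.range (k - l), (l + m + 1))
        * Nat.superFactorial (k - l - 1)
      = k.choose l * (∏ i ∈ Finset.Icc 1 l, i.factorial)
          * (∏ j ∈ Finset.Icc 1 (k - l), j.factorial) := by
  set n := k - l with hn
  obtain ⟨n', hn'⟩ : ∃ n', n = n' + 1 := ⟨n - 1, by omega⟩
  have hP : (∏ m ∈ Finset.range n, (l + m + 1)) = k.choose l * n.factorial := by
    apply Nat.eq_of_mul_eq_mul_right (Nat.factorial_pos l)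
    rw [prod_range_shift_factorial l n, show l + n = k by omega]
    rw [show k.choose l * n.factorial * l.factorial = k.choose l * l.factorial * n.factorial
      by ring]
    exact (Nat.choose_mul_factorial_mul_factorial hl).symm
  rw [Nat.prod_range_factorial_succ, Nat.prod_Icc_factorial, Nat.prod_Icc_factorial, hP]
  rw [hn', Nat.add_sub_cancel, Nat.superFactorial_succ]
  ring

/-- Lemma 3.5 (transversality): the determinant whose first `l` rows are
`∂¹Γ(ξ₁), …, ∂ˡΓ(ξ₁)` and remaining `k-l` rows are `∂¹Γ(ξ₂), …, ∂^{k-l}Γ(ξ₂)`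
has absolute value `c_{k,l} |ξ₂ - ξ₁|^{l(k-l)}` with
`c_{k,l} = C(k,l) ∏_{i=1}^l i! ∏_{j=1}^{k-l} j!`; in particular it is bounded
below by a positive constant (depending only on `k, l`) times `|ξ₁-ξ₂|^{l(k-l)}`. -/
theorem moment_curve_transversality (k l : ℕ) (hk : 1 ≤ k) (hl : l ≤ k) :
    (∀ ξ₁ ξ₂ : ℝ,
      |(Matrix.of (fun r c : Fin k =>
          if (r : ℕ) < l then dGamma k ((r : ℕ) + 1) ξ₁ c
          else dGamma k ((r : ℕ) - l + 1) ξ₂ c)).det|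
        = (Nat.choose k l : ℝ) * (∏ i ∈ Finset.Icc 1 l, (Nat.factorial i : ℝ))
            * (∏ j ∈ Finset.Icc 1 (k - l), (Nat.factorial j : ℝ))
            * |ξ₂ - ξ₁| ^ (l * (k - l)))
    ∧ ∃ c : ℝ, 0 < c ∧ ∀ ξ₁ ξ₂ : ℝ,
        c * |ξ₁ - ξ₂| ^ (l * (k - l))
          ≤ |(Matrix.of (fun r c' : Fin k =>
              if (r : ℕ) < l then dGamma k ((r : ℕ) + 1) ξ₁ c'
              else dGamma k ((r : ℕ) - l + 1) ξ₂ c')).det| := by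
  have key : ∀ ξ₁ ξ₂ : ℝ,
      |(Matrix.of (fun r c : Fin k =>
          if (r : ℕ) < l then dGamma k ((r : ℕ) + 1) ξ₁ c
          else dGamma k ((r : ℕ) - l + 1) ξ₂ c)).det|
        = (Nat.choose k l : ℝ) * (∏ i ∈ Finset.Icc 1 l, (Nat.factorial i : ℝ))
            * (∏ j ∈ Finset.Icc 1 (k - l), (Nat.factorial j : ℝ))
            * |ξ₂ - ξ₁| ^ (l * (k - l)) := by
    intro ξ₁ ξ₂
    rcases Nat.eq_zero_or_pos l with hl0 | hlpos
    · -- l = 0 : triangular in ξ₂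
      subst hl0
      have hMeq : (Matrix.of (fun r c : Fin k =>
          if (r : ℕ) < 0 then dGamma k ((r : ℕ) + 1) ξ₁ c
          else dGamma k ((r : ℕ) - 0 + 1) ξ₂ c))
          = Matrix.of (fun r c : Fin k => dGamma k ((r : ℕ) + 1) ξ₂ c) := by
        ext r c
        simp
      rw [hMeq, det_triangular, Nat.choose_zero_right, Nat.sub_zero, Nat.zero_mul, pow_zero,
        Finset.Icc_eq_empty (by omega : ¬ (1 : ℕ) ≤ 0), Finset.prod_empty]
      rw [abs_of_nonneg (Finset.prod_nonneg fun i _ => by positivity)]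
      ring
    · by_cases hlk : l = k
      · -- l = k : triangular in ξ₁
        subst hlk
        have hMeq : (Matrix.of (fun r c : Fin l =>
            if (r : ℕ) < l then dGamma l ((r : ℕ) + 1) ξ₁ c
            else dGamma l ((r : ℕ) - l + 1) ξ₂ c))
            = Matrix.of (fun r c : Fin l => dGamma l ((r : ℕ) + 1) ξ₁ c) := by
          ext r c
          simp [r.isLt]
        rw [hMeq, det_triangular, Nat.choose_self, Nat.sub_self, Nat.mul_zero, pow_zero,
          Finset.Icc_eq_empty (by omega : ¬ (1 : ℕ) ≤ 0), Finset.prod_empty]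
        rw [abs_of_nonneg (Finset.prod_nonneg fun i _ => by positivity)]
        ring
      · have hlk' : l < k := lt_of_le_of_ne hl hlk
        have hn : 0 < k - l := by omega
        by_cases hxi : ξ₁ = ξ₂
        · -- equal points: repeated row, determinant zero
          subst hxi
          have hrow : (Matrix.of (fun r c : Fin k =>
              if (r : ℕ) < l then dGamma k ((r : ℕ) + 1) ξ₁ c
              else dGamma k ((r : ℕ) - l + 1) ξ₁ c)) (⟨0, by omega⟩ : Fin k)
              = (Matrix.of (fun r c : Fin k =>
              if (r : ℕ) < l then dGamma k ((r : ℕ) + 1) ξ₁ c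
              else dGamma k ((r : ℕ) - l + 1) ξ₁ c)) (⟨l, by omega⟩ : Fin k) := by
            funext c
            simp [hlpos, Nat.sub_self]
          have hne : (⟨0, by omega⟩ : Fin k) ≠ (⟨l, by omega⟩ : Fin k) :=
            Fin.ne_of_val_ne (show (0:ℕ) ≠ l by omega)
          rw [Matrix.det_zero_of_row_eq hne hrow, abs_zero, sub_self, abs_zero,
            zero_pow (Nat.mul_ne_zero (by omega) (by omega))]
          ring
        · -- generic case: ξ₁ ≠ ξ₂, 0 < l < k
          set n := k - l with hndef
          have hln : l + n = k := by omega
          set t : ℝ := ξ₂ - ξ₁ with ht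
          have htne : t ≠ 0 := sub_ne_zero.2 fun h => hxi h.symm
          set M : Matrix (Fin k) (Fin k) ℝ := Matrix.of (fun r c : Fin k =>
            if (r : ℕ) < l then dGamma k ((r : ℕ) + 1) ξ₁ c
            else dGamma k ((r : ℕ) - l + 1) ξ₂ c) with hM
          set B : Matrix (Fin k) (Fin k) ℝ := Matrix.of (fun m c : Fin k =>
            ((((c : ℕ) + 1).choose ((m : ℕ) + 1) : ℕ) : ℝ) * ξ₁ ^ ((c : ℕ) - (m : ℕ))) with hB
          set M0 : Matrix (Fin k) (Fin k) ℝ := Matrix.of (fun r c : Fin k =>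
            if (r : ℕ) < l then dGamma k ((r : ℕ) + 1) 0 c
            else dGamma k ((r : ℕ) - l + 1) t c) with hM0
          have hMB : M = M0 * B := by
            ext r c
            rw [Matrix.mul_apply]
            simp only [hM, hM0, hB, Matrix.of_apply]
            by_cases hr : (r : ℕ) < l
            · simp only [if_pos hr]
              have hd := dGamma_add k ((r : ℕ) + 1) (Nat.le_add_left 1 _) 0 ξ₁ c
              rw [zero_add] at hd
              exact hd
            · simp only [if_neg hr]
              have hd := dGamma_add k ((r : ℕ) - l + 1) (Nat.le_add_left 1 _) t ξ₁ c
              rw [show t + ξ₁ = ξ₂ from by rw [ht]; ring] at hd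
              exact hd
          have hdetB : B.det = 1 := by
            have hBT : B.BlockTriangular id := by
              intro i j hij
              have h2 : (j : ℕ) + 1 < (i : ℕ) + 1 := by
                have : (j : ℕ) < (i : ℕ) := hij
                omega
              simp only [hB, Matrix.of_apply]
              rw [Nat.choose_eq_zero_of_lt h2, Nat.cast_zero, zero_mul]
            rw [Matrix.det_of_upperTriangular hBT]
            apply Finset.prod_eq_one
            intro i _
            simp only [hB, Matrix.of_apply]
            rw [Nat.choose_self, Nat.sub_self, pow_zero, Nat.cast_one, one_mul]
          set e : Fin l ⊕ Fin n ≃ Fin k := finSumFinEquiv.trans (finCongr hln) with he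
          have heL : ∀ i : Fin l, ((e (Sum.inl i) : ℕ)) = (i : ℕ) := fun i => rfl
          have heR : ∀ j : Fin n, ((e (Sum.inr j) : ℕ)) = l + (j : ℕ) := fun j => rfl
          set Dm : Matrix (Fin l) (Fin l) ℝ :=
            Matrix.diagonal (fun i : Fin l => ((((i : ℕ) + 1).factorial : ℕ) : ℝ)) with hDm
          set A : Matrix (Fin n) (Fin n) ℝ := Matrix.of (fun j m : Fin n =>
            ((l + (m : ℕ) + 1).descFactorial ((j : ℕ) + 1) : ℝ)) with hA
          set N : Matrix (Fin n) (Fin n) ℝ := Matrix.of (fun j m : Fin n =>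
            M0 (e (Sum.inr j)) (e (Sum.inr m))) with hNdef
          set X : Matrix (Fin n) (Fin l) ℝ := Matrix.of (fun j i =>
            M0 (e (Sum.inr j)) (e (Sum.inl i))) with hX
          have hsub : M0.submatrix e e = Matrix.fromBlocks Dm 0 X N := by
            ext rc cc
            rcases rc with i | j <;> rcases cc with i' | m
            · simp only [Matrix.submatrix_apply, Matrix.fromBlocks_apply₁₁, hM0, hDm,
                Matrix.of_apply]
              rw [heL i, if_pos i.isLt]
              simp only [dGamma]
              rw [heL i', Matrix.diagonal_apply]
              by_cases hii : i = i'
              · subst hii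
                rw [if_pos rfl, Nat.sub_self, pow_zero, mul_one, Nat.descFactorial_self]
              · rw [if_neg hii]
                rcases lt_or_gt_of_ne (fun h => hii (Fin.ext h) : (i : ℕ) ≠ (i' : ℕ)) with hlt | hgt
                · rw [zero_pow (by omega : (i' : ℕ) + 1 - ((i : ℕ) + 1) ≠ 0), mul_zero]
                · rw [Nat.descFactorial_of_lt (by omega), Nat.cast_zero, zero_mul]
            · simp only [Matrix.submatrix_apply, Matrix.fromBlocks_apply₁₂, hM0,
                Matrix.of_apply, Matrix.zero_apply]
              rw [heL i, if_pos i.isLt]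
              simp only [dGamma]
              rw [heR m]
              rw [zero_pow (by have := i.isLt; omega : l + (m : ℕ) + 1 - ((i : ℕ) + 1) ≠ 0),
                mul_zero]
            · simp only [Matrix.submatrix_apply, Matrix.fromBlocks_apply₂₁, hX, Matrix.of_apply]
            · simp only [Matrix.submatrix_apply, Matrix.fromBlocks_apply₂₂, hNdef, Matrix.of_apply]
          have hdetM0 : M0.det = Dm.det * N.det := by
            rw [← Matrix.det_submatrix_equiv_self e M0, hsub, Matrix.det_fromBlocks_zero₁₂]
          have hN3 : N = Matrix.diagonal (fun j : Fin n => (t ^ ((j : ℕ) + 1))⁻¹) * A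
              * Matrix.diagonal (fun m : Fin n => t ^ (l + (m : ℕ) + 1)) := by
            ext j m
            rw [Matrix.mul_diagonal, Matrix.diagonal_mul]
            simp only [hNdef, hM0, hA, Matrix.of_apply]
            rw [heR j, if_neg (by omega : ¬ l + (j : ℕ) < l),
              show l + (j : ℕ) - l + 1 = (j : ℕ) + 1 by omega]
            simp only [dGamma]
            rw [heR m]
            by_cases hjm : (j : ℕ) + 1 ≤ l + (m : ℕ) + 1
            · rw [pow_sub₀ t htne hjm]
              ring
            · rw [Nat.descFactorial_of_lt (by omega : l + (m : ℕ) + 1 < (j : ℕ) + 1),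
                Nat.cast_zero, zero_mul, mul_zero, zero_mul]
          have hprod : (∏ j : Fin n, (t ^ ((j : ℕ) + 1))⁻¹) * (∏ m : Fin n, t ^ (l + (m : ℕ) + 1))
              = t ^ (l * n) := by
            rw [← Finset.prod_mul_distrib]
            have hterm : ∀ j : Fin n, (t ^ ((j : ℕ) + 1))⁻¹ * t ^ (l + (j : ℕ) + 1) = t ^ l := by
              intro j
              rw [show l + (j : ℕ) + 1 = l + ((j : ℕ) + 1) from rfl, pow_add]
              field_simp
              ring
            rw [Finset.prod_congr rfl (fun j _ => hterm j), Finset.prod_const, Finset.card_univ,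
              Fintype.card_fin, ← pow_mul]
          have hdetA := det_A l n
          rw [← hA] at hdetA
          have hdetN : N.det = t ^ (l * n) * A.det := by
            rw [hN3, Matrix.det_mul, Matrix.det_mul, Matrix.det_diagonal, Matrix.det_diagonal,
              ← hprod]
            ring
          have hdetprod : M.det = (∏ i : Fin l, ((((i : ℕ) + 1).factorial : ℕ) : ℝ))
              * (t ^ (l * n) * ((∏ m : Fin n, ((l + (m : ℕ) + 1 : ℕ) : ℝ))
                * (Nat.superFactorial (n - 1) : ℝ))) := by
            rw [hMB, Matrix.det_mul, hdetB, mul_one, hdetM0, hdetN, hdetA, hDm,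
              Matrix.det_diagonal]
          have hconstR : (∏ i : Fin l, ((((i : ℕ) + 1).factorial : ℕ) : ℝ))
              * ((∏ m : Fin n, ((l + (m : ℕ) + 1 : ℕ) : ℝ)) * (Nat.superFactorial (n - 1) : ℝ))
              = (k.choose l : ℝ) * (∏ i ∈ Finset.Icc 1 l, (i.factorial : ℝ))
                * (∏ j ∈ Finset.Icc 1 n, (j.factorial : ℝ)) := by
            have hnat := const_nat k l hl hlk'
            rw [← hndef] at hnat
            have e1 : (∏ i : Fin l, ((((i : ℕ) + 1).factorial : ℕ) : ℝ))
                = ((∏ i ∈ Finset.range l, (i + 1).factorial : ℕ) : ℝ) := by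
              rw [Nat.cast_prod]
              exact Fin.prod_univ_eq_prod_range (fun i => (((i + 1).factorial : ℕ) : ℝ)) l
            have e2 : (∏ m : Fin n, ((l + (m : ℕ) + 1 : ℕ) : ℝ))
                = ((∏ m ∈ Finset.range n, (l + m + 1) : ℕ) : ℝ) := by
              rw [Nat.cast_prod]
              exact Fin.prod_univ_eq_prod_range (fun m => (((l + m + 1 : ℕ)) : ℝ)) n
            rw [e1, e2, ← mul_assoc, ← Nat.cast_mul, ← Nat.cast_mul, hnat]
            push_cast
            ring
          have hp1 : (0:ℝ) ≤ ∏ i : Fin l, ((((i : ℕ) + 1).factorial : ℕ) : ℝ) :=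
            Finset.prod_nonneg fun i _ => Nat.cast_nonneg _
          have hp2 : (0:ℝ) ≤ ∏ m : Fin n, ((l + (m : ℕ) + 1 : ℕ) : ℝ) :=
            Finset.prod_nonneg fun m _ => Nat.cast_nonneg _
          have hp3 : (0:ℝ) ≤ ((Nat.superFactorial (n - 1) : ℕ) : ℝ) := Nat.cast_nonneg _
          rw [hdetprod, abs_mul, abs_mul, abs_mul, abs_pow, abs_of_nonneg hp1,
            abs_of_nonneg hp2, abs_of_nonneg hp3, ← hconstR]
          ring
  refine ⟨key, (Nat.choose k l : ℝ) * (∏ i ∈ Finset.Icc 1 l, (Nat.factorial i : ℝ))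
            * (∏ j ∈ Finset.Icc 1 (k - l), (Nat.factorial j : ℝ)), ?_, fun ξ₁ ξ₂ => ?_⟩
  · apply mul_pos (mul_pos _ _)
    · exact Finset.prod_pos fun j _ => by exact_mod_cast j.factorial_pos
    · exact_mod_cast Nat.choose_pos hl
    · exact Finset.prod_pos fun i _ => by exact_mod_cast i.factorial_pos
  · rw [key ξ₁ ξ₂, abs_sub_comm ξ₂ ξ₁]
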